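/- Under the abstract factorization hypotheses, suppose additionally that every partial sum ∑_{k=n}^{h}(b_k − a_k) (0 ≤ n ≤ h) is nonzero, that ker ℒ_n is nontrivial for every n ≥ 0, and choose nonzero vectors φ_n ∈ ker ℒ_n. Set f_{N,n} = ℛ_{N−1}ℛ_{N−2}⋯ℛ_n φ_n for 0 ≤ n ≤ N. Then f_{N,0}, f_{N,1}, …, f_{N,N} are N+1 pairwise orthogonal nonzero eigenvectors of 𝒟_N, hence an orthogonal basis of V_N; moreover ℛ_N f_{N,n} = f_{N+1,n} and ℒ_N f_{N,n} = [∑_{k=n}^{N−1}(b_k − a_k)] f_{N−1,n}. -/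

import Mathlib

open scoped ComplexInnerProductSpace

noncomputable section

variable {V : ℕ → Type*} [∀ N, NormedAddCommGroup (V N)] [∀ N, InnerProductSpace ℂ (V N)]

/-- `RIter R n k` is the iterated raising operator
`ℛ_{n+k-1} ∘ ℛ_{n+k-2} ∘ ⋯ ∘ ℛ_n : V n → V (n+k)`. -/
def RIter (R : ∀ N, V N →ₗ[ℂ] V (N + 1)) (n : ℕ) : ∀ k : ℕ, V n →ₗ[ℂ] V (n + k)
  | 0 => LinearMap.id
  | k + 1 => (R (n + k)).comp (RIter R n k)

/-- `KerL L n f` says `ℒ_n f = 0`, with the convention `ℒ_0 = 0` (so that for `n = 0` every `f`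
qualifies).  Here `L N = ℒ_{N+1}`. -/
def KerL (L : ∀ N, V (N + 1) →ₗ[ℂ] V N) : ∀ n : ℕ, V n → Prop
  | 0, _ => True
  | m + 1, f => L m f = 0

/-- Transport of a vector along an equality of indices. -/
def vcastV {i j : ℕ} (h : i = j) (v : V i) : V j := by subst h; exact v


section Helpers
set_option linter.unusedSectionVars false

variable {V : ℕ → Type*} [∀ N, NormedAddCommGroup (V N)] [∀ N, InnerProductSpace ℂ (V N)]

lemma vcastV_rfl {i : ℕ} (h : i = i) (v : V i) : vcastV h v = v := rfl

lemma vcastV_trans {i j l : ℕ} (h1 : i = j) (h2 : j = l) (v : V i) :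
    vcastV h2 (vcastV h1 v) = vcastV (h1.trans h2) v := by subst h1; subst h2; rfl

lemma inner_vcastV {i j : ℕ} (h : i = j) (u v : V i) :
    ⟪vcastV h u, vcastV h v⟫ = ⟪u, v⟫ := by subst h; rfl

lemma vcastV_ne_zero {i j : ℕ} (h : i = j) (v : V i) : vcastV h v ≠ 0 ↔ v ≠ 0 := by
  subst h; exact Iff.rfl

lemma R_vcastV (R : ∀ N, V N →ₗ[ℂ] V (N + 1)) {i j : ℕ} (h : i = j) (v : V i) :
    R j (vcastV h v) = vcastV (by rw [h]) (R i v) := by subst h; rfl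

lemma RIter_comp (R : ∀ N, V N →ₗ[ℂ] V (N + 1)) (n p q : ℕ) (x : V n) :
    RIter R n (p + q) x
      = vcastV (Nat.add_assoc n p q) (RIter R (n + p) q (RIter R n p x)) := by
  induction q with
  | zero => rfl
  | succ q ih =>
      show R (n + (p + q)) (RIter R n (p + q) x) = _
      rw [ih, R_vcastV]
      rfl

section Ops

variable (D : ∀ N, V N →ₗ[ℂ] V N) (R : ∀ N, V N →ₗ[ℂ] V (N + 1))
  (L : ∀ N, V (N + 1) →ₗ[ℂ] V N) (a b : ℕ → ℂ)

lemma L_R_eigen (hLR : ∀ N : ℕ, (L N).comp (R N) = -(D N) + b N • LinearMap.id)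
    {N : ℕ} {v : V N} {μ : ℂ} (hv : D N v = μ • v) :
    L N (R N v) = (b N - μ) • v := by
  have h := LinearMap.congr_fun (hLR N) v
  simp only [LinearMap.comp_apply, LinearMap.add_apply, LinearMap.neg_apply,
    LinearMap.smul_apply, LinearMap.id_apply] at h
  rw [h, hv]
  module

lemma D_R_eigen (hRL : ∀ N : ℕ, (R N).comp (L N) = -(D (N + 1)) + a (N + 1) • LinearMap.id)
    (hLR : ∀ N : ℕ, (L N).comp (R N) = -(D N) + b N • LinearMap.id)
    {N : ℕ} {v : V N} {μ : ℂ} (hv : D N v = μ • v) :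
    D (N + 1) (R N v) = (a (N + 1) - (b N - μ)) • R N v := by
  have h := LinearMap.congr_fun (hRL N) (R N v)
  simp only [LinearMap.comp_apply, LinearMap.add_apply, LinearMap.neg_apply,
    LinearMap.smul_apply, LinearMap.id_apply] at h
  rw [L_R_eigen D R L b hLR hv, map_smul] at h
  rw [sub_smul, h]
  module

lemma eigen_exists (hRL : ∀ N : ℕ, (R N).comp (L N) = -(D (N + 1)) + a (N + 1) • LinearMap.id)
    (hLR : ∀ N : ℕ, (L N).comp (R N) = -(D N) + b N • LinearMap.id)
    (m k : ℕ) (v : V m) (hv : ∃ μ : ℂ, D m v = μ • v) :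
    ∃ μ : ℂ, D (m + k) (RIter R m k v) = μ • RIter R m k v := by
  induction k with
  | zero => exact hv
  | succ k ih =>
      obtain ⟨μ, hμ⟩ := ih
      exact ⟨_, D_R_eigen D R L a b hRL hLR hμ⟩

lemma inner_RIter_zero
    (hAdj : ∀ (N : ℕ) (f₁ : V N) (f₂ : V (N + 1)), ⟪R N f₁, f₂⟫ = ⟪f₁, L N f₂⟫)
    (hRL : ∀ N : ℕ, (R N).comp (L N) = -(D (N + 1)) + a (N + 1) • LinearMap.id)
    (hLR : ∀ N : ℕ, (L N).comp (R N) = -(D N) + b N • LinearMap.id)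
    (m k : ℕ) (u v : V m) (hv : ∃ μ : ℂ, D m v = μ • v) (h0 : ⟪u, v⟫ = 0) :
    ⟪RIter R m k u, RIter R m k v⟫ = 0 := by
  induction k with
  | zero => exact h0
  | succ k ih =>
      obtain ⟨μ, hμ⟩ := eigen_exists D R L a b hRL hLR m k v hv
      show ⟪R (m + k) (RIter R m k u), R (m + k) (RIter R m k v)⟫ = 0
      rw [hAdj, L_R_eigen D R L b hLR hμ, inner_smul_right, ih, mul_zero]

variable (φ : ∀ n, V n)

lemma eigen_main
    (hRL : ∀ N : ℕ, (R N).comp (L N) = -(D (N + 1)) + a (N + 1) • LinearMap.id)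
    (hLR : ∀ N : ℕ, (L N).comp (R N) = -(D N) + b N • LinearMap.id)
    (hD0 : D 0 = a 0 • LinearMap.id)
    (hφker : ∀ n, KerL L n (φ n)) (n k : ℕ) :
    D (n + k) (RIter R n k (φ n)) =
      (a (n + k) - ∑ i ∈ Finset.Ico n (n + k), (b i - a i)) • RIter R n k (φ n) := by
  induction k with
  | zero =>
      show D n (φ n) = (a n - ∑ i ∈ Finset.Ico n n, (b i - a i)) • φ n
      rw [Finset.Ico_self, Finset.sum_empty, sub_zero]
      cases n with
      | zero =>
          rw [hD0]; simp
      | succ m =>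
          have hk : L m (φ (m + 1)) = 0 := hφker (m + 1)
          have h := LinearMap.congr_fun (hRL m) (φ (m + 1))
          simp only [LinearMap.comp_apply, LinearMap.add_apply, LinearMap.neg_apply,
            LinearMap.smul_apply, LinearMap.id_apply, hk, map_zero] at h
          have h2 := h.symm
          rw [neg_add_eq_sub, sub_eq_zero] at h2
          exact h2.symm
  | succ k ih =>
      have step := D_R_eigen D R L a b hRL hLR ih
      show D ((n + k) + 1) (R (n + k) (RIter R n k (φ n))) =
        (a ((n + k) + 1) - ∑ i ∈ Finset.Ico n ((n + k) + 1), (b i - a i)) •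
          R (n + k) (RIter R n k (φ n))
      rw [step, Finset.sum_Ico_succ_top (Nat.le_add_right n k)]
      congr 1
      ring

lemma L_main
    (hRL : ∀ N : ℕ, (R N).comp (L N) = -(D (N + 1)) + a (N + 1) • LinearMap.id)
    (hLR : ∀ N : ℕ, (L N).comp (R N) = -(D N) + b N • LinearMap.id)
    (hD0 : D 0 = a 0 • LinearMap.id)
    (hφker : ∀ n, KerL L n (φ n)) (n k : ℕ) :
    L (n + k) (RIter R n (k + 1) (φ n)) =
      (∑ i ∈ Finset.Ico n (n + (k + 1)), (b i - a i)) • RIter R n k (φ n) := by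
  show L (n + k) (R (n + k) (RIter R n k (φ n))) =
    (∑ i ∈ Finset.Ico n ((n + k) + 1), (b i - a i)) • RIter R n k (φ n)
  rw [L_R_eigen D R L b hLR (eigen_main D R L a b φ hRL hLR hD0 hφker n k),
    Finset.sum_Ico_succ_top (Nat.le_add_right n k)]
  congr 1
  ring

lemma ne_main
    (hRL : ∀ N : ℕ, (R N).comp (L N) = -(D (N + 1)) + a (N + 1) • LinearMap.id)
    (hLR : ∀ N : ℕ, (L N).comp (R N) = -(D N) + b N • LinearMap.id)
    (hD0 : D 0 = a 0 • LinearMap.id)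
    (hsum : ∀ n h : ℕ, n ≤ h → (∑ i ∈ Finset.Icc n h, (b i - a i)) ≠ 0)
    (hφker : ∀ n, KerL L n (φ n)) (hφne : ∀ n, φ n ≠ 0) (n k : ℕ) :
    RIter R n k (φ n) ≠ 0 := by
  induction k with
  | zero => exact hφne n
  | succ k ih =>
      intro h0
      have h := L_main D R L a b φ hRL hLR hD0 hφker n k
      rw [h0, map_zero] at h
      have hs : (∑ i ∈ Finset.Ico n (n + (k + 1)), (b i - a i)) ≠ 0 := by
        show (∑ i ∈ Finset.Ico n ((n + k) + 1), (b i - a i)) ≠ 0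
        rw [Finset.Ico_add_one_right_eq_Icc]
        exact hsum n (n + k) (Nat.le_add_right n k)
      exact ih ((smul_eq_zero.mp h.symm).resolve_left hs)

lemma ortho_main
    (hAdj : ∀ (N : ℕ) (f₁ : V N) (f₂ : V (N + 1)), ⟪R N f₁, f₂⟫ = ⟪f₁, L N f₂⟫)
    (hRL : ∀ N : ℕ, (R N).comp (L N) = -(D (N + 1)) + a (N + 1) • LinearMap.id)
    (hLR : ∀ N : ℕ, (L N).comp (R N) = -(D N) + b N • LinearMap.id)
    (hD0 : D 0 = a 0 • LinearMap.id)
    (hφker : ∀ n, KerL L n (φ n)) (n j k : ℕ) :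
    ⟪RIter R (n + (j + 1)) k (φ (n + (j + 1))),
      RIter R (n + (j + 1)) k (RIter R n (j + 1) (φ n))⟫ = 0 := by
  apply inner_RIter_zero D R L a b hAdj hRL hLR
  · exact ⟨_, eigen_main D R L a b φ hRL hLR hD0 hφker n (j + 1)⟩
  · have hk : L (n + j) (φ (n + (j + 1))) = 0 := hφker (n + j + 1)
    have h := hAdj (n + j) (RIter R n j (φ n)) (φ (n + (j + 1)))
    rw [hk, inner_zero_right] at h
    have h2 : ⟪RIter R n (j + 1) (φ n), φ (n + (j + 1))⟫ = 0 := h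
    rw [← inner_conj_symm, h2, map_zero]

lemma ortho_cast
    (hAdj : ∀ (N : ℕ) (f₁ : V N) (f₂ : V (N + 1)), ⟪R N f₁, f₂⟫ = ⟪f₁, L N f₂⟫)
    (hRL : ∀ N : ℕ, (R N).comp (L N) = -(D (N + 1)) + a (N + 1) • LinearMap.id)
    (hLR : ∀ N : ℕ, (L N).comp (R N) = -(D N) + b N • LinearMap.id)
    (hD0 : D 0 = a 0 • LinearMap.id)
    (hφker : ∀ n, KerL L n (φ n)) {M n m kA kB : ℕ} (hnm : n < m)
    (hA : m + kA = M) (hB : n + kB = M) :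
    ⟪vcastV hA (RIter R m kA (φ m)), vcastV hB (RIter R n kB (φ n))⟫ = 0 := by
  obtain ⟨d, rfl⟩ : ∃ d, m = n + (d + 1) := ⟨m - n - 1, by omega⟩
  have hkB : kB = (d + 1) + kA := by omega
  subst hkB
  subst hA
  rw [vcastV_rfl, RIter_comp, vcastV_trans, vcastV_rfl]
  exact ortho_main D R L a b φ hAdj hRL hLR hD0 hφker n d kA

end Ops

end Helpers

/-- Under the abstract factorization hypotheses, assume moreover that every partial sum
`∑_{k'=n}^{h} (b_{k'} - a_{k'})` (for `0 ≤ n ≤ h`) is nonzero, that `ker ℒ_n` is nontrivial for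
every `n`, and choose nonzero `φ_n ∈ ker ℒ_n`.  Put `f_{N,n} = ℛ_{N-1}⋯ℛ_n φ_n` (here
`f_{n+k,n} = RIter R n k (φ n)`).  Then the `f_{N,n}` (`0 ≤ n ≤ N`) are nonzero (clause 1),
pairwise orthogonal (clause 2, stated for `n < m = n + j + 1`), eigenvectors of `𝒟_N`
(clause 3), and they span `V N`, hence form an orthogonal basis (clause 4); moreover
`ℛ_N f_{N,n} = f_{N+1,n}` (clause 5) and
`ℒ_N f_{N,n} = (∑_{k'=n}^{N-1} (b_{k'} - a_{k'})) f_{N-1,n}` (clause 6, stated for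
`N = n + k + 1`; for `N = n` it is the hypothesis `ℒ_n φ_n = 0`). -/
theorem complete_orthogonal_eigenvector_system
    [∀ N, FiniteDimensional ℂ (V N)]
    (hdim : ∀ N, Module.finrank ℂ (V N) = N + 1)
    (D : ∀ N, V N →ₗ[ℂ] V N) (hsym : ∀ N, (D N).IsSymmetric)
    (R : ∀ N, V N →ₗ[ℂ] V (N + 1)) (L : ∀ N, V (N + 1) →ₗ[ℂ] V N)
    (a b : ℕ → ℂ)
    (hAdj : ∀ (N : ℕ) (f₁ : V N) (f₂ : V (N + 1)), ⟪R N f₁, f₂⟫ = ⟪f₁, L N f₂⟫)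
    (hRL : ∀ N : ℕ, (R N).comp (L N) = -(D (N + 1)) + a (N + 1) • LinearMap.id)
    (hLR : ∀ N : ℕ, (L N).comp (R N) = -(D N) + b N • LinearMap.id)
    (hD0 : D 0 = a 0 • LinearMap.id)
    (hsum : ∀ n h : ℕ, n ≤ h → (∑ i ∈ Finset.Icc n h, (b i - a i)) ≠ 0)
    (φ : ∀ n, V n) (hφker : ∀ n, KerL L n (φ n)) (hφne : ∀ n, φ n ≠ 0) :
    (∀ n k : ℕ, RIter R n k (φ n) ≠ 0) ∧
    (∀ n j k : ℕ,
        ⟪RIter R (n + (j + 1)) k (φ (n + (j + 1))),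
          RIter R (n + (j + 1)) k (RIter R n (j + 1) (φ n))⟫ = 0) ∧
    (∀ n k : ℕ,
        D (n + k) (RIter R n k (φ n)) =
          (a (n + k) - ∑ i ∈ Finset.Ico n (n + k), (b i - a i)) • RIter R n k (φ n)) ∧
    (∀ N : ℕ,
        Submodule.span ℂ
            {v : V N | ∃ (n k : ℕ) (h : n + k = N), v = vcastV h (RIter R n k (φ n))} = ⊤) ∧
    (∀ n k : ℕ, R (n + k) (RIter R n k (φ n)) = RIter R n (k + 1) (φ n)) ∧
    (∀ n k : ℕ,
        L (n + k) (RIter R n (k + 1) (φ n)) =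
          (∑ i ∈ Finset.Ico n (n + (k + 1)), (b i - a i)) • RIter R n k (φ n)) := by
  have H1 : ∀ n k : ℕ, RIter R n k (φ n) ≠ 0 :=
    ne_main D R L a b φ hRL hLR hD0 hsum hφker hφne
  have H2 := ortho_main D R L a b φ hAdj hRL hLR hD0 hφker
  have H3 := eigen_main D R L a b φ hRL hLR hD0 hφker
  have H6 := L_main D R L a b φ hRL hLR hD0 hφker
  refine ⟨H1, H2, H3, ?_, fun n k => rfl, H6⟩
  intro N
  set g : Fin (N + 1) → V N := fun i =>
    vcastV (show (i : ℕ) + (N - (i : ℕ)) = N by omega) (RIter R i (N - (i : ℕ)) (φ i)) with hg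
  have hz : ∀ i, g i ≠ 0 := fun i => (vcastV_ne_zero _ _).mpr (H1 i (N - (i : ℕ)))
  have ho : Pairwise fun i j => ⟪g i, g j⟫ = 0 := by
    intro i j hij
    rcases lt_or_gt_of_ne hij with hlt | hgt
    · have h := ortho_cast D R L a b φ hAdj hRL hLR hD0 hφker (M := N)
        (n := (i : ℕ)) (m := (j : ℕ)) (kA := N - (j : ℕ)) (kB := N - (i : ℕ))
        (show (i : ℕ) < (j : ℕ) from hlt) (by omega) (by omega)
      have h2 : ⟪g j, g i⟫ = 0 := h
      rw [← inner_conj_symm, h2, map_zero]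
    · have h := ortho_cast D R L a b φ hAdj hRL hLR hD0 hφker (M := N)
        (n := (j : ℕ)) (m := (i : ℕ)) (kA := N - (i : ℕ)) (kB := N - (j : ℕ))
        (show (j : ℕ) < (i : ℕ) from hgt) (by omega) (by omega)
      exact h
  have hli : LinearIndependent ℂ g := linearIndependent_of_ne_zero_of_inner_eq_zero hz ho
  have hspan : Submodule.span ℂ (Set.range g) = ⊤ :=
    hli.span_eq_top_of_card_eq_finrank (by simp [hdim N])
  apply top_unique
  rw [← hspan]
  apply Submodule.span_mono
  rintro v ⟨i, rfl⟩
  exact ⟨(i : ℕ), N - (i : ℕ), by omega, rfl⟩
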